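/- arXiv:1807.08295 — 3 statements merged into one kernel-verified Lean document; each statement's English description precedes it below -/
import Mathlib

section
/- Let G be a graph and G\bar{G} its complementary prism. If u is a simplicial vertex of G and its corresponding vertex \bar{u} is a simplicial vertex of \bar{G}, then every geodetic hull set S of G\bar{G} satisfies S ∩ {u, \bar{u}} ≠ ∅. -/
open SimpleGraph

/-- The geodetic closed interval `I[u,v]`: `u`, `v`, and all vertices lying on
some shortest `u`–`v` path. -/
def geoInterval {V : Type*} (G : SimpleGraph V) (u v : V) : Set V :=
  {w | w = u ∨ w = v ∨ (G.Reachable u v ∧ G.dist u w + G.dist w v = G.dist u v)}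

/-- A set is geodetically convex if it is closed under intervals. -/
def IsGeoConvex {V : Type*} (G : SimpleGraph V) (S : Set V) : Prop :=
  ∀ u ∈ S, ∀ v ∈ S, geoInterval G u v ⊆ S

/-- The geodetic convex hull: the smallest convex set containing `S`. -/
def geoHull {V : Type*} (G : SimpleGraph V) (S : Set V) : Set V :=
  ⋂₀ {T | IsGeoConvex G T ∧ S ⊆ T}

/-- `S` is a hull set if its convex hull is the whole vertex set. -/
def IsHullSet {V : Type*} (G : SimpleGraph V) (S : Set V) : Prop :=
  geoHull G S = Set.univ

/-- The geodetic hull number: minimum cardinality of a hull set. -/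
noncomputable def hullNumber {V : Type*} (G : SimpleGraph V) : ℕ :=
  sInf {n | ∃ S : Set V, S.ncard = n ∧ IsHullSet G S}

/-- A vertex is simplicial if its closed neighborhood induces a clique. -/
def IsSimplicial {V : Type*} (G : SimpleGraph V) (v : V) : Prop :=
  ∀ a ∈ G.neighborSet v, ∀ b ∈ G.neighborSet v, a ≠ b → G.Adj a b

/-- The complementary prism `G G̅`: disjoint union of `G` (left copies) and its
complement (right copies), plus a perfect matching between corresponding vertices. -/
def compPrism {V : Type*} (G : SimpleGraph V) : SimpleGraph (V ⊕ V) where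
  Adj x y :=
    match x, y with
    | .inl u, .inl w => G.Adj u w
    | .inr u, .inr w => u ≠ w ∧ ¬ G.Adj u w
    | .inl u, .inr w => u = w
    | .inr u, .inl w => u = w
  symm := by
    constructor
    rintro (u | u) (w | w) h
    · exact h.symm
    · exact h.symm
    · exact h.symm
    · exact ⟨h.1.symm, fun a => h.2 a.symm⟩
  loopless := by
    constructor
    rintro (u | u) h
    · exact G.irrefl h
    · exact h.1 rfl

section Aux

variable {W : Type*}

/-- In a connected graph, from `v ≠ a` there is a neighbor of `v` one step closer to `a`. -/
lemma exists_adj_dist (H : SimpleGraph W) (hc : H.Connected) {a v : W} (h : a ≠ v) :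
    ∃ x, H.Adj v x ∧ H.dist a x + 1 = H.dist a v := by
  obtain ⟨p, hp⟩ := hc.exists_walk_length_eq_dist a v
  obtain ⟨x, hadj, p', hcons⟩ := SimpleGraph.Walk.exists_eq_cons_of_ne (Ne.symm h) p.reverse
  have h1 : H.dist a x ≤ p'.length := by
    have := SimpleGraph.dist_le p'.reverse
    simpa using this
  have h2 : p'.length + 1 = H.dist a v := by
    have hlen : p.reverse.length = p.length := SimpleGraph.Walk.length_reverse p
    rw [hcons, SimpleGraph.Walk.length_cons] at hlen
    omega
  have h3 : H.dist a v ≤ H.dist a x + H.dist x v := hc.dist_triangle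
  have h4 : H.dist x v = 1 := SimpleGraph.dist_eq_one_iff_adj.mpr hadj.symm
  exact ⟨x, hadj, by omega⟩

/-- Abstract key step: `c` has a special neighbor `m`; all other neighbors of `m`
form a clique and are at distance ≤ 2 from other neighbors of `c`.  If a geodesic
from `a` to `b` passes through `c` and approaches `c` through `m`, contradiction. -/
lemma stepA (H : SimpleGraph W) (hc : H.Connected) (c m : W) (hadj : H.Adj c m)
    (hcm : ∀ x y, H.Adj m x → H.Adj m y → x ≠ c → y ≠ c → x ≠ y → H.Adj x y)
    (hcross : ∀ x y, H.Adj c x → x ≠ m → H.Adj m y → y ≠ c → H.dist x y ≤ 2)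
    (a b : W) (ham : a ≠ m) (hbc : b ≠ c)
    (hgeo : H.dist a c + H.dist c b = H.dist a b)
    (hstep : H.dist a m + 1 = H.dist a c) : False := by
  have hmc1 : H.dist m c = 1 := SimpleGraph.dist_eq_one_iff_adj.mpr hadj.symm
  have ht1 : H.dist m b ≤ H.dist m c + H.dist c b := hc.dist_triangle
  have ht2 : H.dist a b ≤ H.dist a m + H.dist m b := hc.dist_triangle
  have hq2 : H.dist m b = H.dist c b + 1 := by omega
  have hbm : b ≠ m := by
    rintro rfl
    rw [SimpleGraph.dist_self] at hq2
    omega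
  obtain ⟨x2, hx2adj, hx2⟩ := exists_adj_dist H hc ham
  obtain ⟨y2, hy2adj, hy2⟩ := exists_adj_dist H hc hbm
  have hy2' : H.dist y2 b + 1 = H.dist m b := by
    rw [H.dist_comm (u := y2) (v := b), H.dist_comm (u := m) (v := b)]; exact hy2
  have hx2c : x2 ≠ c := by
    rintro rfl
    omega
  -- show y2 = c
  have htx : H.dist a b ≤ H.dist a x2 + (H.dist x2 y2 + H.dist y2 b) := by
    calc H.dist a b ≤ H.dist a x2 + H.dist x2 b := hc.dist_triangle
    _ ≤ H.dist a x2 + (H.dist x2 y2 + H.dist y2 b) := by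
        have := hc.dist_triangle (u := x2) (v := y2) (w := b); omega
  have hxy2 : 2 ≤ H.dist x2 y2 := by omega
  have hy2c : y2 = c := by
    by_contra hy2c
    rcases eq_or_ne x2 y2 with rfl | hne
    · rw [SimpleGraph.dist_self] at hxy2; omega
    · have : H.Adj x2 y2 := hcm x2 y2 hx2adj hy2adj hx2c hy2c hne
      have := SimpleGraph.dist_eq_one_iff_adj.mpr this
      omega
  rw [hy2c] at hy2'
  -- neighbor of c towards b
  obtain ⟨y1, hy1adj, hy1⟩ := exists_adj_dist H hc hbc
  have hy1' : H.dist y1 b + 1 = H.dist c b := by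
    rw [H.dist_comm (u := y1) (v := b), H.dist_comm (u := c) (v := b)]; exact hy1
  have hy1m : y1 ≠ m := by
    rintro rfl
    omega
  have hfin : H.dist a b ≤ H.dist a x2 + (H.dist x2 y1 + H.dist y1 b) := by
    calc H.dist a b ≤ H.dist a x2 + H.dist x2 b := hc.dist_triangle
    _ ≤ H.dist a x2 + (H.dist x2 y1 + H.dist y1 b) := by
        have := hc.dist_triangle (u := x2) (v := y1) (w := b); omega
  have hcr : H.dist y1 x2 ≤ 2 := hcross y1 x2 hy1adj hy1m hx2adj hx2c
  rw [SimpleGraph.dist_comm] at hcr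
  omega

/-- Abstract main step: under the symmetric hypotheses, no geodesic between
vertices other than `c`, `m` passes through `c`. -/
lemma stepB (H : SimpleGraph W) (hc : H.Connected) (c m : W) (hadj : H.Adj c m)
    (hcc : ∀ x y, H.Adj c x → H.Adj c y → x ≠ m → y ≠ m → x ≠ y → H.Adj x y)
    (hcm : ∀ x y, H.Adj m x → H.Adj m y → x ≠ c → y ≠ c → x ≠ y → H.Adj x y)
    (hcross : ∀ x y, H.Adj c x → x ≠ m → H.Adj m y → y ≠ c → H.dist x y ≤ 2)
    (a b : W) (hac : a ≠ c) (ham : a ≠ m) (hbc : b ≠ c) (hbm : b ≠ m)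
    (hgeo : H.dist a c + H.dist c b = H.dist a b) : False := by
  obtain ⟨x, hxadj, hx⟩ := exists_adj_dist H hc hac
  obtain ⟨y, hyadj, hy⟩ := exists_adj_dist H hc hbc
  have hy' : H.dist y b + 1 = H.dist c b := by
    rw [H.dist_comm (u := y) (v := b), H.dist_comm (u := c) (v := b)]; exact hy
  rcases eq_or_ne x m with rfl | hxm
  · exact stepA H hc c x hadj hcm hcross a b ham hbc hgeo hx
  rcases eq_or_ne y m with rfl | hym
  · refine stepA H hc c y hadj hcm hcross b a hbm hac ?_ hy
    rw [H.dist_comm (u := b) (v := c), H.dist_comm (u := c) (v := a),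
      H.dist_comm (u := b) (v := a)]
    omega
  have htx : H.dist a b ≤ H.dist a x + (H.dist x y + H.dist y b) := by
    calc H.dist a b ≤ H.dist a x + H.dist x b := hc.dist_triangle
    _ ≤ H.dist a x + (H.dist x y + H.dist y b) := by
        have := hc.dist_triangle (u := x) (v := y) (w := b); omega
  have hxy : 2 ≤ H.dist x y := by omega
  rcases eq_or_ne x y with rfl | hne
  · rw [SimpleGraph.dist_self] at hxy; omega
  · have : H.Adj x y := hcc x y hxadj hyadj hxm hym hne
    have := SimpleGraph.dist_eq_one_iff_adj.mpr this
    omega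

end Aux

lemma compPrism_connected {V : Type*} [Nonempty V] (G : SimpleGraph V) :
    (compPrism G).Connected := by
  have key : ∀ v w : V, (compPrism G).Reachable (Sum.inl v) (Sum.inl w) := by
    intro v w
    rcases eq_or_ne v w with rfl | hvw
    · exact SimpleGraph.Reachable.refl _
    by_cases h : G.Adj v w
    · exact SimpleGraph.Adj.reachable h
    · have r1 : (compPrism G).Reachable (Sum.inl v) (Sum.inr v) :=
        SimpleGraph.Adj.reachable (show v = v from rfl)
      have r2 : (compPrism G).Reachable (Sum.inr v) (Sum.inr w) :=
        SimpleGraph.Adj.reachable (show v ≠ w ∧ ¬ G.Adj v w from ⟨hvw, h⟩)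
      have r3 : (compPrism G).Reachable (Sum.inr w) (Sum.inl w) :=
        SimpleGraph.Adj.reachable (show w = w from rfl)
      exact (r1.trans r2).trans r3
  have match1 : ∀ v : V, (compPrism G).Reachable (Sum.inl v) (Sum.inr v) := fun v =>
    SimpleGraph.Adj.reachable (show v = v from rfl)
  constructor
  rintro (v | v) (w | w)
  · exact key v w
  · exact (key v w).trans (match1 w)
  · exact ((match1 v).symm).trans (key v w)
  · exact (((match1 v).symm).trans (key v w)).trans (match1 w)

section Prism

variable {V : Type*} (G : SimpleGraph V) (u : V)

lemma prism_cliq_l (h1 : IsSimplicial G u) :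
    ∀ x y, (compPrism G).Adj (Sum.inl u) x → (compPrism G).Adj (Sum.inl u) y →
      x ≠ Sum.inr u → y ≠ Sum.inr u → x ≠ y → (compPrism G).Adj x y := by
  rintro (w1 | w1) (w2 | w2) hx hy hxm hym hxy
  · have hx' : G.Adj u w1 := hx
    have hy' : G.Adj u w2 := hy
    exact h1 w1 hx' w2 hy' (fun h => hxy (by rw [h]))
  · exact absurd (congrArg Sum.inr (show u = w2 from hy).symm) hym
  · exact absurd (congrArg Sum.inr (show u = w1 from hx).symm) hxm
  · exact absurd (congrArg Sum.inr (show u = w1 from hx).symm) hxm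

lemma prism_cliq_r (h2 : IsSimplicial Gᶜ u) :
    ∀ x y, (compPrism G).Adj (Sum.inr u) x → (compPrism G).Adj (Sum.inr u) y →
      x ≠ Sum.inl u → y ≠ Sum.inl u → x ≠ y → (compPrism G).Adj x y := by
  rintro (w1 | w1) (w2 | w2) hx hy hxm hym hxy
  · exact absurd (congrArg Sum.inl (show u = w1 from hx).symm) hxm
  · exact absurd (congrArg Sum.inl (show u = w1 from hx).symm) hxm
  · exact absurd (congrArg Sum.inl (show u = w2 from hy).symm) hym
  · have hx' : u ≠ w1 ∧ ¬ G.Adj u w1 := hx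
    have hy' : u ≠ w2 ∧ ¬ G.Adj u w2 := hy
    have hne : w1 ≠ w2 := fun h => hxy (by rw [h])
    have : Gᶜ.Adj w1 w2 := h2 w1 ((G.compl_adj u w1).mpr ⟨hx'.1, hx'.2⟩)
      w2 ((G.compl_adj u w2).mpr ⟨hy'.1, hy'.2⟩) hne
    exact ⟨hne, ((G.compl_adj w1 w2).mp this).2⟩

lemma prism_cross :
    ∀ x y, (compPrism G).Adj (Sum.inl u) x → x ≠ Sum.inr u →
      (compPrism G).Adj (Sum.inr u) y → y ≠ Sum.inl u → (compPrism G).dist x y ≤ 2 := by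
  rintro (w | w) (w' | w') hx hxm hy hym
  · exact absurd (congrArg Sum.inl (show u = w' from hy).symm) hym
  · have hx' : G.Adj u w := hx
    have hy' : u ≠ w' ∧ ¬ G.Adj u w' := hy
    have hww' : w ≠ w' := by rintro rfl; exact hy'.2 hx'
    by_cases hadj : G.Adj w w'
    · have a1 : (compPrism G).Adj (Sum.inl w) (Sum.inl w') := hadj
      have a2 : (compPrism G).Adj (Sum.inl w') (Sum.inr w') := rfl
      have := SimpleGraph.dist_le (SimpleGraph.Walk.cons a1 (SimpleGraph.Walk.cons a2 SimpleGraph.Walk.nil))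
      simpa using this
    · have a1 : (compPrism G).Adj (Sum.inl w) (Sum.inr w) := rfl
      have a2 : (compPrism G).Adj (Sum.inr w) (Sum.inr w') := ⟨hww', hadj⟩
      have := SimpleGraph.dist_le (SimpleGraph.Walk.cons a1 (SimpleGraph.Walk.cons a2 SimpleGraph.Walk.nil))
      simpa using this
  · exact absurd (congrArg Sum.inr (show u = w from hx).symm) hxm
  · exact absurd (congrArg Sum.inr (show u = w from hx).symm) hxm

end Prism

theorem hullSet_inter_simplicial_pair {V : Type*} [Fintype V] (G : SimpleGraph V) (u : V)
    (h1 : IsSimplicial G u) (h2 : IsSimplicial Gᶜ u)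
    (S : Set (V ⊕ V)) (hS : IsHullSet (compPrism G) S) :
    Sum.inl u ∈ S ∨ Sum.inr u ∈ S := by
  by_contra hcon
  push_neg at hcon
  obtain ⟨hl, hr⟩ := hcon
  have : Nonempty V := ⟨u⟩
  have hc : (compPrism G).Connected := compPrism_connected G
  have hadj : (compPrism G).Adj (Sum.inl u) (Sum.inr u) := rfl
  set T : Set (V ⊕ V) := {x | x ≠ Sum.inl u ∧ x ≠ Sum.inr u} with hT
  have hTconv : IsGeoConvex (compPrism G) T := by
    rintro a ⟨ha1, ha2⟩ b ⟨hb1, hb2⟩ w hw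
    simp only [geoInterval, Set.mem_setOf_eq] at hw
    rcases hw with rfl | rfl | ⟨-, hgeo⟩
    · exact ⟨ha1, ha2⟩
    · exact ⟨hb1, hb2⟩
    · constructor
      · rintro rfl
        exact stepB (compPrism G) hc (Sum.inl u) (Sum.inr u) hadj
          (prism_cliq_l G u h1) (prism_cliq_r G u h2) (prism_cross G u)
          a b ha1 ha2 hb1 hb2 hgeo
      · rintro rfl
        refine stepB (compPrism G) hc (Sum.inr u) (Sum.inl u) hadj.symm
          (prism_cliq_r G u h2) (prism_cliq_l G u h1) ?_
          a b ha2 ha1 hb2 hb1 hgeo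
        intro x y hx hxm hy hyc
        have := prism_cross G u y x hy hyc hx hxm
        rwa [SimpleGraph.dist_comm] at this
  have hsub : S ⊆ T := fun x hx =>
    ⟨fun h => hl (h ▸ hx), fun h => hr (h ▸ hx)⟩
  have hhull : geoHull (compPrism G) S ⊆ T := Set.sInter_subset_of_mem ⟨hTconv, hsub⟩
  rw [hS] at hhull
  exact (hhull (Set.mem_univ (Sum.inl u))).1 rfl
end

section
/- Let T be a tree on at least 3 vertices that is not a star K_{1,n}. Then the geodetic hull number of the complementary prism T\bar{T} equals 2. -/
open SimpleGraph

open SimpleGraph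

section Aux

variable {V : Type*} {G : SimpleGraph V} {u v w z : V}

lemma dist_eq_one_of_adj' (h : G.Adj u v) : G.dist u v = 1 :=
  SimpleGraph.dist_eq_one_iff_adj.mpr h

lemma eq_of_dist_eq_zero' (hr : G.Reachable u v) (h : G.dist u v = 0) : u = v :=
  hr.dist_eq_zero_iff.mp h

lemma dist_eq_two' (hne : u ≠ v) (hna : ¬ G.Adj u v) (h1 : G.Adj u w) (h2 : G.Adj w v) :
    G.dist u v = 2 := by
  have hr : G.Reachable u v := h1.reachable.trans h2.reachable
  have hle : G.dist u v ≤ 2 := by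
    have := SimpleGraph.dist_le (Walk.cons h1 (Walk.cons h2 Walk.nil))
    simpa using this
  have h0 : G.dist u v ≠ 0 := fun h => hne (eq_of_dist_eq_zero' hr h)
  have h1' : G.dist u v ≠ 1 := fun h => hna (SimpleGraph.dist_eq_one_iff_adj.mp h)
  omega

lemma exists_mid' (h : G.dist u v = 2) : ∃ w, G.Adj u w ∧ G.Adj w v := by
  obtain ⟨p, hp⟩ := SimpleGraph.exists_walk_of_dist_ne_zero (by omega : G.dist u v ≠ 0)
  rw [h] at hp
  cases p with
  | nil => simp at hp
  | cons h1 q =>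
    cases q with
    | nil => simp at hp
    | cons h2 q2 =>
      cases q2 with
      | nil => exact ⟨_, h1, h2⟩
      | cons h3 q3 => simp [Walk.length_cons] at hp

lemma dist_eq_three' (hne : u ≠ v) (hna : ¬G.Adj u v)
    (hmid : ∀ w, ¬(G.Adj u w ∧ G.Adj w v))
    (p : G.Walk u v) (hp : p.length = 3) : G.dist u v = 3 := by
  have hr : G.Reachable u v := ⟨p⟩
  have hle : G.dist u v ≤ 3 := hp ▸ SimpleGraph.dist_le p
  have h0 : G.dist u v ≠ 0 := fun h => hne (eq_of_dist_eq_zero' hr h)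
  have h1 : G.dist u v ≠ 1 := fun h => hna (SimpleGraph.dist_eq_one_iff_adj.mp h)
  have h2 : G.dist u v ≠ 2 := by
    intro h
    obtain ⟨w, hw1, hw2⟩ := exists_mid' h
    exact hmid w ⟨hw1, hw2⟩
  omega

/-! Hull lemmas -/

lemma subset_geoHull (G : SimpleGraph V) (S : Set V) : S ⊆ geoHull G S :=
  fun x hx => Set.mem_sInter.2 (fun _ hT => hT.2 hx)

lemma geoHull_interval {S : Set V} (hu : u ∈ geoHull G S) (hv : v ∈ geoHull G S) :
    geoInterval G u v ⊆ geoHull G S := by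
  intro x hx
  refine Set.mem_sInter.2 (fun C hC => ?_)
  exact hC.1 u (Set.mem_sInter.1 hu C hC) v (Set.mem_sInter.1 hv C hC) hx

lemma geoHull_subset {S C : Set V} (hconv : IsGeoConvex G C) (hS : S ⊆ C) :
    geoHull G S ⊆ C := fun x hx => Set.mem_sInter.1 hx C ⟨hconv, hS⟩

lemma mem_interval_mid (hne : u ≠ v) (hna : ¬ G.Adj u v) (h1 : G.Adj u z) (h2 : G.Adj z v) :
    z ∈ geoInterval G u v :=
  Or.inr (Or.inr ⟨h1.reachable.trans h2.reachable, by
    rw [dist_eq_one_of_adj' h1, dist_eq_one_of_adj' h2, dist_eq_two' hne hna h1 h2]⟩)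

/-! Tree (acyclic) lemmas -/

lemma tri_free (hT : G.IsAcyclic) (h1 : G.Adj u v) (h2 : G.Adj v w) (h3 : G.Adj u w) :
    False := by
  have hp : (Walk.cons h3 Walk.nil : G.Walk u w).IsPath := by
    simp [Walk.isPath_def, h3.ne]
  have hq : (Walk.cons h1 (Walk.cons h2 Walk.nil) : G.Walk u w).IsPath := by
    simp [Walk.isPath_def, h1.ne, h2.ne, h3.ne]
  have := hT.path_unique (⟨_, hp⟩ : G.Path u w) ⟨_, hq⟩
  have hlen := congrArg (fun p : G.Path u w => p.val.length) this
  simp at hlen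

lemma mid_unique (hT : G.IsAcyclic) (huw : u ≠ w) (h1 : G.Adj u v) (h2 : G.Adj v w)
    (h3 : G.Adj u z) (h4 : G.Adj z w) : z = v := by
  have hp : (Walk.cons h1 (Walk.cons h2 Walk.nil) : G.Walk u w).IsPath := by
    simp [Walk.isPath_def, h1.ne, h2.ne, huw]
  have hq : (Walk.cons h3 (Walk.cons h4 Walk.nil) : G.Walk u w).IsPath := by
    simp [Walk.isPath_def, h3.ne, h4.ne, huw]
  have := hT.path_unique (⟨_, hq⟩ : G.Path u w) ⟨_, hp⟩
  have hsup := congrArg (fun p : G.Path u w => p.val.support) this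
  simp [Walk.support_cons] at hsup
  exact hsup

section Chain
variable {a b c d : V}

lemma chain_path (hT : G.IsAcyclic) (hab : G.Adj a b) (hbc : G.Adj b c) (hcd : G.Adj c d)
    (hac : a ≠ c) (hbd : b ≠ d) (had : a ≠ d) :
    (Walk.cons hab (Walk.cons hbc (Walk.cons hcd Walk.nil)) : G.Walk a d).IsPath := by
  simp [Walk.isPath_def, hab.ne, hbc.ne, hcd.ne, hac, hbd, had]

lemma chain_not_adj (hT : G.IsAcyclic) (hab : G.Adj a b) (hbc : G.Adj b c) (hcd : G.Adj c d)
    (hac : a ≠ c) (hbd : b ≠ d) (had : a ≠ d) : ¬ G.Adj a d := by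
  intro h
  have hp : (Walk.cons h Walk.nil : G.Walk a d).IsPath := by
    simp [Walk.isPath_def, had]
  have := hT.path_unique (⟨_, hp⟩ : G.Path a d)
    ⟨_, chain_path hT hab hbc hcd hac hbd had⟩
  have hlen := congrArg (fun p : G.Path a d => p.val.length) this
  simp at hlen

lemma chain_no_common (hT : G.IsAcyclic) (hab : G.Adj a b) (hbc : G.Adj b c) (hcd : G.Adj c d)
    (hac : a ≠ c) (hbd : b ≠ d) (had : a ≠ d) (z : V)
    (h1 : G.Adj a z) (h2 : G.Adj z d) : False := by
  have hp : (Walk.cons h1 (Walk.cons h2 Walk.nil) : G.Walk a d).IsPath := by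
    simp [Walk.isPath_def, h1.ne, h2.ne, had]
  have := hT.path_unique (⟨_, hp⟩ : G.Path a d)
    ⟨_, chain_path hT hab hbc hcd hac hbd had⟩
  have hlen := congrArg (fun p : G.Path a d => p.val.length) this
  simp at hlen

end Chain

lemma exists_chain (hconn : G.Connected)
    (hstar : ¬ ∃ c : V, ∀ v : V, v ≠ c → G.Adj c v)
    (hedge : ∃ u v, G.Adj u v) :
    ∃ a b c d, G.Adj a b ∧ G.Adj b c ∧ G.Adj c d ∧ a ≠ c ∧ b ≠ d ∧ a ≠ d := by
  classical
  by_contra hno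
  push_neg at hstar
  obtain ⟨b, c, hbc⟩ := hedge
  have sub1 : ∀ v, v ≠ b → v ≠ c → G.Adj v b ∨ G.Adj v c := by
    intro v hvb hvc
    obtain ⟨w⟩ := hconn v b
    obtain ⟨q, hq⟩ := w.toPath
    cases q with
    | nil => exact absurd rfl hvb
    | cons h1 q1 =>
      cases q1 with
      | nil => exact Or.inl h1
      | cons h2 q2 =>
        cases q2 with
        | nil =>
          -- v - x - b with h1 : Adj v x, h2 : Adj x b
          rename_i x
          by_cases hxc : x = c
          · subst hxc; exact Or.inr h1
          · exact absurd ⟨v, x, b, c, h1, h2, hbc, hvb, hxc, hvc⟩ hno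
        | cons h3 q3 =>
          rename_i x y zz
          exfalso
          have hsup := hq.support_nodup
          simp only [Walk.support_cons, List.nodup_cons, List.mem_cons] at hsup
          push_neg at hsup
          obtain ⟨⟨hvx, hvy, hvs⟩, ⟨hxy, hxs⟩, -⟩ := hsup
          have hzmem : zz ∈ q3.support := Walk.start_mem_support q3
          exact hno ⟨v, x, y, zz, h1, h2, h3, hvy,
            fun h => hxs (by rw [h]; exact hzmem),
            fun h => hvs (by rw [h]; exact hzmem)⟩
  obtain ⟨w1, hw1b, hnbw1⟩ := hstar b
  obtain ⟨w2, hw2c, hncw2⟩ := hstar c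
  have hw1c : w1 ≠ c := fun h => hnbw1 (h ▸ hbc)
  have hw1adj : G.Adj w1 c := by
    rcases sub1 w1 hw1b hw1c with h | h
    · exact absurd h.symm hnbw1
    · exact h
  have hw2b : w2 ≠ b := fun h => hncw2 (by rw [h]; exact hbc.symm)
  have hw2adj : G.Adj w2 b := by
    rcases sub1 w2 hw2b hw2c with h | h
    · exact h
    · exact absurd h.symm hncw2
  have hw12 : w2 ≠ w1 := by
    intro h
    exact hnbw1 (by rw [← h]; exact hw2adj.symm)
  exact hno ⟨w2, b, c, w1, hw2adj, hbc, hw1adj.symm, hw2c, fun h => hw1b h.symm, hw12⟩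

end Aux

lemma compPrism_reachable {V : Type*} (T : SimpleGraph V) (hconn : T.Connected) :
    ∀ x y : V ⊕ V, (compPrism T).Reachable x y := by
  have hl : ∀ u v : V, (compPrism T).Reachable (Sum.inl u) (Sum.inl v) := by
    intro u v
    exact Reachable.map (⟨Sum.inl, fun h => h⟩ : T →g compPrism T) (hconn u v)
  have hm : ∀ u : V, (compPrism T).Reachable (Sum.inl u) (Sum.inr u) :=
    fun u => (show (compPrism T).Adj (Sum.inl u) (Sum.inr u) from rfl).reachable
  rintro (x | x) (y | y)
  · exact hl x y
  · exact (hl x y).trans (hm y)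
  · exact (hm x).symm.trans (hl x y)
  · exact (hm x).symm.trans ((hl x y).trans (hm y))

theorem hullNumber_compPrism_tree_not_star {V : Type*} [Fintype V] (T : SimpleGraph V)
    (hconn : T.Connected) (hac : T.IsAcyclic) (hcard : 3 ≤ Fintype.card V)
    (hstar : ¬ ∃ c : V, ∀ v : V, v ≠ c → T.Adj c v) :
    hullNumber (compPrism T) = 2 := by
  classical
  set H := compPrism T with hH
  have hreach : ∀ x y : V ⊕ V, H.Reachable x y := compPrism_reachable T hconn
  have hedge : ∃ u v, T.Adj u v := by
    obtain ⟨u, v, huv⟩ := Fintype.exists_pair_of_one_lt_card (α := V) (by omega)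
    obtain ⟨w⟩ := hconn u v
    cases w with
    | nil => exact absurd rfl huv
    | cons h _ => exact ⟨_, _, h⟩
  obtain ⟨a, b, c, d, hab, hbc, hcd, hac', hbd', had'⟩ := exists_chain hconn hstar hedge
  have hnad : ¬ T.Adj a d := chain_not_adj hac hab hbc hcd hac' hbd' had'
  have hnoz : ∀ z, ¬(T.Adj a z ∧ T.Adj z d) :=
    fun z hz => chain_no_common hac hab hbc hcd hac' hbd' had' z hz.1 hz.2
  have hnac : ¬ T.Adj a c := fun h => tri_free hac hab hbc h
  have hnbd : ¬ T.Adj b d := fun h => tri_free hac hbc hcd h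
  have adj_lr : ∀ u : V, H.Adj (Sum.inl u) (Sum.inr u) := fun u => rfl
  have adj_rl : ∀ u : V, H.Adj (Sum.inr u) (Sum.inl u) := fun u => rfl
  have adj_rr : ∀ u v : V, u ≠ v → ¬T.Adj u v → H.Adj (Sum.inr u) (Sum.inr v) :=
    fun u v h1 h2 => ⟨h1, h2⟩
  have adj_ll : ∀ u v : V, T.Adj u v → H.Adj (Sum.inl u) (Sum.inl v) := fun u v h => h
  set S : Set (V ⊕ V) := {Sum.inl a, Sum.inl d} with hSdef
  have hina : Sum.inl a ∈ geoHull H S := subset_geoHull H S (by simp [hSdef])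
  have hind : Sum.inl d ∈ geoHull H S := subset_geoHull H S (by simp [hSdef])
  have hd3 : H.dist (Sum.inl a) (Sum.inl d) = 3 := by
    refine dist_eq_three' (fun h => had' (Sum.inl.inj h)) hnad ?_
      (Walk.cons (adj_lr a) (Walk.cons (adj_rr a d had' hnad)
        (Walk.cons (adj_rl d) Walk.nil))) (by simp)
    rintro (z | z) ⟨h1, h2⟩
    · exact hnoz z ⟨h1, h2⟩
    · exact had' ((h1 : a = z).trans (h2 : z = d))
  have hmem : ∀ z, H.dist (Sum.inl a) z + H.dist z (Sum.inl d) = 3 → z ∈ geoHull H S := by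
    intro z hz
    exact geoHull_interval hina hind (Or.inr (Or.inr ⟨hreach _ _, by rw [hd3]; exact hz⟩))
  have d_ra_ld : H.dist (Sum.inr a) (Sum.inl d) = 2 :=
    dist_eq_two' (by simp) (fun h => had' h) (adj_rr a d had' hnad) (adj_rl d)
  have h_inr_a : Sum.inr a ∈ geoHull H S :=
    hmem _ (by rw [dist_eq_one_of_adj' (adj_lr a), d_ra_ld])
  have d_la_rd : H.dist (Sum.inl a) (Sum.inr d) = 2 :=
    dist_eq_two' (by simp) (fun h => had' h) (adj_lr a) (adj_rr a d had' hnad)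
  have h_inr_d : Sum.inr d ∈ geoHull H S :=
    hmem _ (by rw [d_la_rd, dist_eq_one_of_adj' (adj_rl d)])
  have d_lb_ld : H.dist (Sum.inl b) (Sum.inl d) = 2 :=
    dist_eq_two' (fun h => hbd' (Sum.inl.inj h)) hnbd (adj_ll b c hbc) (adj_ll c d hcd)
  have h_inl_b : Sum.inl b ∈ geoHull H S :=
    hmem _ (by rw [dist_eq_one_of_adj' (adj_ll a b hab), d_lb_ld])
  have d_la_lc : H.dist (Sum.inl a) (Sum.inl c) = 2 :=
    dist_eq_two' (fun h => hac' (Sum.inl.inj h)) hnac (adj_ll a b hab) (adj_ll b c hbc)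
  have h_inl_c : Sum.inl c ∈ geoHull H S :=
    hmem _ (by rw [d_la_lc, dist_eq_one_of_adj' (adj_ll c d hcd)])
  have ruleB : ∀ x y : V, Sum.inl x ∈ geoHull H S → Sum.inr y ∈ geoHull H S →
      x ≠ y → ¬T.Adj x y → Sum.inr x ∈ geoHull H S := by
    intro x y hx hy hne hnadj
    exact geoHull_interval hx hy
      (mem_interval_mid (by simp) (fun h => hne h) (adj_lr x) (adj_rr x y hne hnadj))
  have ruleA : ∀ x y : V, Sum.inr x ∈ geoHull H S → Sum.inl y ∈ geoHull H S →
      T.Adj x y → Sum.inl x ∈ geoHull H S := by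
    intro x y hx hy hadj
    exact geoHull_interval hx hy
      (mem_interval_mid (by simp) (fun h => hadj.ne h) (adj_rl x) (adj_ll x y hadj))
  have ruleC : ∀ u v x : V, Sum.inr u ∈ geoHull H S → Sum.inr v ∈ geoHull H S →
      T.Adj u v → x ≠ u → x ≠ v → ¬T.Adj x u → ¬T.Adj x v → Sum.inr x ∈ geoHull H S := by
    intro u v x hu hv huv hxu hxv hnxu hnxv
    refine geoHull_interval hu hv (mem_interval_mid ?_ ?_ ?_ ?_)
    · exact fun h => huv.ne (Sum.inr.inj h)
    · exact fun h => h.2 huv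
    · exact ⟨fun h => hxu h.symm, fun h => hnxu h.symm⟩
    · exact ⟨hxv, hnxv⟩
  have h_inr_b : Sum.inr b ∈ geoHull H S := ruleB b d h_inl_b h_inr_d hbd' hnbd
  have h_inr_c : Sum.inr c ∈ geoHull H S :=
    ruleB c a h_inl_c h_inr_a (fun h => hac' h.symm) (fun h => hnac h.symm)
  have hinr : ∀ x, Sum.inr x ∈ geoHull H S := by
    intro x
    by_cases hxa : x = a; · rw [hxa]; exact h_inr_a
    by_cases hxb : x = b; · rw [hxb]; exact h_inr_b
    by_cases hxc : x = c; · rw [hxc]; exact h_inr_c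
    by_cases hxd : x = d; · rw [hxd]; exact h_inr_d
    have n_ab : ¬(T.Adj x a ∧ T.Adj x b) := fun h => tri_free hac h.1 hab h.2
    have n_bc : ¬(T.Adj x b ∧ T.Adj x c) := fun h => tri_free hac h.1 hbc h.2
    have n_cd : ¬(T.Adj x c ∧ T.Adj x d) := fun h => tri_free hac h.1 hcd h.2
    have n_ac : ¬(T.Adj x a ∧ T.Adj x c) :=
      fun h => hxb (mid_unique hac hac' hab hbc h.1.symm h.2)
    have n_bd : ¬(T.Adj x b ∧ T.Adj x d) :=
      fun h => hxc (mid_unique hac hbd' hbc hcd h.1.symm h.2)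
    have n_ad : ¬(T.Adj x a ∧ T.Adj x d) := fun h => hnoz x ⟨h.1.symm, h.2⟩
    by_cases h1 : ¬T.Adj x a ∧ ¬T.Adj x b
    · exact ruleC a b x h_inr_a h_inr_b hab hxa hxb h1.1 h1.2
    by_cases h2 : ¬T.Adj x b ∧ ¬T.Adj x c
    · exact ruleC b c x h_inr_b h_inr_c hbc hxb hxc h2.1 h2.2
    by_cases h3 : ¬T.Adj x c ∧ ¬T.Adj x d
    · exact ruleC c d x h_inr_c h_inr_d hcd hxc hxd h3.1 h3.2
    · exfalso
      push_neg at h1 h2 h3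
      rcases Classical.em (T.Adj x a) with ha | ha
      · rcases Classical.em (T.Adj x b) with hb | hb
        · exact n_ab ⟨ha, hb⟩
        · rcases h2 hb with hc
          exact n_ac ⟨ha, hc⟩
      · rcases h1 ha with hb
        rcases Classical.em (T.Adj x c) with hc | hc
        · exact n_bc ⟨hb, hc⟩
        · exact n_bd ⟨hb, h3 hc⟩
  have hinl : ∀ x, Sum.inl x ∈ geoHull H S := by
    have key : ∀ (y z : V), T.Walk y z → Sum.inl z ∈ geoHull H S →
        Sum.inl y ∈ geoHull H S := by
      intro y z w
      induction w with
      | nil => exact id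
      | cons h p ih => exact fun hz => ruleA _ _ (hinr _) (ih hz) h
    intro x
    obtain ⟨w⟩ := hconn x a
    exact key x a w hina
  have hset : IsHullSet H S := by
    apply Set.eq_univ_of_forall
    rintro (x | x)
    · exact hinl x
    · exact hinr x
  have h2mem : 2 ∈ {n | ∃ S : Set (V ⊕ V), S.ncard = n ∧ IsHullSet H S} :=
    ⟨S, by rw [hSdef]; exact Set.ncard_pair (fun h => had' (Sum.inl.inj h)), hset⟩
  have hlb : ∀ n ∈ {n | ∃ S : Set (V ⊕ V), S.ncard = n ∧ IsHullSet H S}, 2 ≤ n := by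
    rintro n ⟨S', hcard', hhull'⟩
    by_contra hlt
    push_neg at hlt
    interval_cases n
    · have hS0 : S' = ∅ := (Set.ncard_eq_zero S'.toFinite).mp hcard'
      subst hS0
      have hsub : geoHull H (∅ : Set (V ⊕ V)) ⊆ ∅ :=
        geoHull_subset (fun u hu => absurd hu (Set.notMem_empty u)) Set.Subset.rfl
      exact Set.notMem_empty (Sum.inl a) (hsub (hhull'.symm ▸ Set.mem_univ _))
    · obtain ⟨x, rfl⟩ := Set.ncard_eq_one.mp hcard'
      have hconv : IsGeoConvex H {x} := by
        intro u hu v hv zz hz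
        have hu' : u = x := hu
        have hv' : v = x := hv
        rcases hz with h | h | ⟨hr, hsum⟩
        · exact (h.trans hu' : zz ∈ ({x} : Set (V ⊕ V)))
        · exact (h.trans hv' : zz ∈ ({x} : Set (V ⊕ V)))
        · rw [hu', hv'] at hsum
          have h0 : H.dist x zz = 0 := by
            have hs := SimpleGraph.dist_self (G := H) (v := x)
            omega
          exact ((eq_of_dist_eq_zero' (hreach x zz) h0).symm : zz ∈ ({x} : Set (V ⊕ V)))
      have hsub : geoHull H {x} ⊆ {x} := geoHull_subset hconv Set.Subset.rfl
      have e1 : (Sum.inl a : V ⊕ V) = x := hsub (hhull'.symm ▸ Set.mem_univ _)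
      have e2 : (Sum.inr a : V ⊕ V) = x := hsub (hhull'.symm ▸ Set.mem_univ _)
      exact Sum.inl_ne_inr (e1.trans e2.symm)
  show sInf _ = 2
  exact le_antisymm (Nat.sInf_le h2mem) (le_csInf ⟨2, h2mem⟩ hlb)
end

section
/- Let G be a disconnected graph with exactly one nontrivial connected component and t > 0 trivial components. Then the geodetic hull number of the complementary prism satisfies h(G\bar{G}) ≥ t + 2. -/
open SimpleGraph

section Aux

variable {V : Type*} {G : SimpleGraph V}

@[simp] lemma cp_adj_ll {u w : V} :
    (compPrism G).Adj (Sum.inl u) (Sum.inl w) ↔ G.Adj u w := Iff.rfl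
@[simp] lemma cp_adj_rr {u w : V} :
    (compPrism G).Adj (Sum.inr u) (Sum.inr w) ↔ u ≠ w ∧ ¬ G.Adj u w := Iff.rfl
@[simp] lemma cp_adj_lr {u w : V} :
    (compPrism G).Adj (Sum.inl u) (Sum.inr w) ↔ u = w := Iff.rfl
@[simp] lemma cp_adj_rl {u w : V} :
    (compPrism G).Adj (Sum.inr u) (Sum.inl w) ↔ u = w := Iff.rfl

/-- The set of isolated vertices of `G`. -/
def Isol (G : SimpleGraph V) : Set V := {v | ∀ w, ¬ G.Adj v w}

lemma geoInterval_comm {u v : V} : geoInterval G u v = geoInterval G v u := by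
  ext w
  constructor <;> rintro (rfl | rfl | ⟨hr, he⟩)
  · exact Or.inr (Or.inl rfl)
  · exact Or.inl rfl
  · refine Or.inr (Or.inr ⟨hr.symm, ?_⟩)
    rw [show G.dist v w = G.dist w v from dist_comm,
      show G.dist w u = G.dist u w from dist_comm,
      show G.dist v u = G.dist u v from dist_comm]
    omega
  · exact Or.inr (Or.inl rfl)
  · exact Or.inl rfl
  · refine Or.inr (Or.inr ⟨hr.symm, ?_⟩)
    rw [show G.dist u w = G.dist w u from dist_comm,
      show G.dist w v = G.dist v w from dist_comm,
      show G.dist u v = G.dist v u from dist_comm]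
    omega

variable {W : Type*} {H : SimpleGraph W}

lemma interval_mem_cases (hpre : H.Preconnected) {p q w : W} (h : w ∈ geoInterval H p q) :
    w = p ∨ w = q ∨
      (H.dist p w ≠ 0 ∧ H.dist w q ≠ 0 ∧ H.dist p w + H.dist w q = H.dist p q) := by
  rcases h with rfl | rfl | ⟨hr, he⟩
  · exact Or.inl rfl
  · exact Or.inr (Or.inl rfl)
  · by_cases h1 : H.dist p w = 0
    · exact Or.inl (((hpre p w).dist_eq_zero_iff.mp h1).symm)
    · by_cases h2 : H.dist w q = 0
      · exact Or.inr (Or.inl ((hpre w q).dist_eq_zero_iff.mp h2))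
      · exact Or.inr (Or.inr ⟨h1, h2, he⟩)

lemma mid_of_dist_two {x y : W} (h : H.dist x y = 2) : ∃ z, H.Adj x z ∧ H.Adj z y := by
  obtain ⟨p, hp⟩ := SimpleGraph.exists_walk_of_dist_ne_zero (by omega : H.dist x y ≠ 0)
  rw [h] at hp
  cases p with
  | nil => simp at hp
  | cons h1 q =>
    cases q with
    | nil => simp at hp
    | cons h2 r =>
      cases r with
      | nil => exact ⟨_, h1, h2⟩
      | cons h3 s => simp [SimpleGraph.Walk.length_cons] at hp

lemma dist_eq_two'_s10 {x y : W} (hne : x ≠ y) (hnadj : ¬ H.Adj x y)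
    (p : H.Walk x y) (hp : p.length = 2) : H.dist x y = 2 := by
  have hle : H.dist x y ≤ 2 := hp ▸ SimpleGraph.dist_le p
  have h0 : H.dist x y ≠ 0 := by
    intro h0'
    rcases SimpleGraph.dist_eq_zero_iff_eq_or_not_reachable.mp h0' with rfl | hr
    · exact hne rfl
    · exact hr ⟨p⟩
  have h1 : H.dist x y ≠ 1 := fun h => hnadj (SimpleGraph.dist_eq_one_iff_adj.mp h)
  omega

lemma dist_eq_three'_s10 {x y : W} (hne : x ≠ y) (hnadj : ¬ H.Adj x y)
    (hmid : ∀ z, ¬ (H.Adj x z ∧ H.Adj z y))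
    (p : H.Walk x y) (hp : p.length = 3) : H.dist x y = 3 := by
  have hle : H.dist x y ≤ 3 := hp ▸ SimpleGraph.dist_le p
  have h0 : H.dist x y ≠ 0 := by
    intro h0'
    rcases SimpleGraph.dist_eq_zero_iff_eq_or_not_reachable.mp h0' with rfl | hr
    · exact hne rfl
    · exact hr ⟨p⟩
  have h1 : H.dist x y ≠ 1 := fun h => hnadj (SimpleGraph.dist_eq_one_iff_adj.mp h)
  have h2 : H.dist x y ≠ 2 := by
    intro h
    obtain ⟨z, hz⟩ := mid_of_dist_two h
    exact hmid z hz
  omega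

/-- The complementary prism is preconnected as soon as `G` has an isolated vertex. -/
lemma cp_preconnected {i : V} (hi : i ∈ Isol G) : (compPrism G).Preconnected := by
  have hrr : ∀ x y : V, (compPrism G).Reachable (Sum.inr x) (Sum.inr y) := by
    intro x y
    by_cases hxy : x = y
    · subst hxy; rfl
    by_cases hadj : G.Adj x y
    · have hx : x ≠ i := fun h => hi y (h ▸ hadj)
      have hy : y ≠ i := fun h => hi x (h ▸ hadj.symm)
      have e1 : (compPrism G).Adj (Sum.inr x) (Sum.inr i) :=
        ⟨hx, fun h => hi x h.symm⟩
      have e2 : (compPrism G).Adj (Sum.inr i) (Sum.inr y) := ⟨Ne.symm hy, hi y⟩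
      exact (e1.reachable).trans e2.reachable
    · exact SimpleGraph.Adj.reachable ⟨hxy, hadj⟩
  have hlr : ∀ x : V, (compPrism G).Reachable (Sum.inl x) (Sum.inr x) := fun x =>
    SimpleGraph.Adj.reachable (by simp)
  intro p q
  rcases p with u | u <;> rcases q with v | v
  · exact ((hlr u).trans (hrr u v)).trans (hlr v).symm
  · exact (hlr u).trans (hrr u v)
  · exact (hrr u v).trans (hlr v).symm
  · exact hrr u v

variable (hpre : (compPrism G).Preconnected) {a : V} {S' : Set V}
  (hS' : ∀ u ∈ S', u = a ∨ u ∈ Isol G)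

include hpre hS' in
lemma interval_ll_subset {u v : V} (hu : u ∈ S') (hv : v ∈ S') :
    geoInterval (compPrism G) (Sum.inl u) (Sum.inl v) ⊆
      Sum.inl '' S' ∪ Sum.inr '' S' := by
  intro w hw
  rcases interval_mem_cases hpre hw with rfl | rfl | ⟨h1, h2, he⟩
  · exact Or.inl ⟨u, hu, rfl⟩
  · exact Or.inl ⟨v, hv, rfl⟩
  by_cases huv : u = v
  · subst huv
    rw [SimpleGraph.dist_self] at he
    omega
  have hiso : u ∈ Isol G ∨ v ∈ Isol G := by
    rcases hS' u hu with rfl | h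
    · rcases hS' v hv with rfl | h
      · exact absurd rfl huv
      · exact Or.inr h
    · exact Or.inl h
  have hnadj : ¬ G.Adj u v := by
    rcases hiso with h | h
    · exact h v
    · exact fun hadj => h u hadj.symm
  have hd : (compPrism G).dist (Sum.inl u) (Sum.inl v) = 3 := by
    refine dist_eq_three'_s10 (by simp [huv]) (by simpa using hnadj) ?_
      (SimpleGraph.Walk.cons (by simp)
        (SimpleGraph.Walk.cons (show (compPrism G).Adj (Sum.inr u) (Sum.inr v) from
          ⟨huv, hnadj⟩)
          (SimpleGraph.Walk.cons (by simp) SimpleGraph.Walk.nil))) (by simp)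
    rintro (z | z) ⟨ha1, ha2⟩
    · rcases hiso with h | h
      · exact h z ha1
      · exact h z ha2.symm
    · simp only [cp_adj_lr, cp_adj_rl] at ha1 ha2
      exact huv (ha1.trans ha2)
  rw [hd] at he
  have hsplit : (compPrism G).dist (Sum.inl u) w = 1 ∧
      (compPrism G).dist w (Sum.inl v) = 2 ∨
      (compPrism G).dist (Sum.inl u) w = 2 ∧
      (compPrism G).dist w (Sum.inl v) = 1 := by omega
  rcases hsplit with ⟨e1, e2⟩ | ⟨e1, e2⟩
  · have hadj := SimpleGraph.dist_eq_one_iff_adj.mp e1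
    rcases w with z | z
    · exfalso
      obtain ⟨m, hm1, hm2⟩ := mid_of_dist_two e2
      rcases m with y | y
      · rcases hiso with h | h
        · exact h z hadj
        · exact h y hm2.symm
      · simp only [cp_adj_lr, cp_adj_rl] at hm1 hm2
        subst hm1; subst hm2
        exact hnadj hadj
    · simp only [cp_adj_lr] at hadj
      exact Or.inr ⟨u, hu, by rw [hadj]⟩
  · have hadj := SimpleGraph.dist_eq_one_iff_adj.mp e2
    rcases w with z | z
    · exfalso
      obtain ⟨m, hm1, hm2⟩ := mid_of_dist_two e1
      rcases m with y | y
      · rcases hiso with h | h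
        · exact h y hm1
        · exact h z hadj.symm
      · simp only [cp_adj_lr, cp_adj_rl] at hm1 hm2
        subst hm1; subst hm2
        exact hnadj hadj
    · simp only [cp_adj_rl] at hadj
      exact Or.inr ⟨v, hv, by rw [hadj]⟩

include hpre hS' in
lemma interval_lr_subset {u v : V} (hu : u ∈ S') (hv : v ∈ S') :
    geoInterval (compPrism G) (Sum.inl u) (Sum.inr v) ⊆
      Sum.inl '' S' ∪ Sum.inr '' S' := by
  intro w hw
  rcases interval_mem_cases hpre hw with rfl | rfl | ⟨h1, h2, he⟩
  · exact Or.inl ⟨u, hu, rfl⟩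
  · exact Or.inr ⟨v, hv, rfl⟩
  by_cases huv : u = v
  · subst huv
    rw [SimpleGraph.dist_eq_one_iff_adj.mpr
      (show (compPrism G).Adj (Sum.inl u) (Sum.inr u) from rfl)] at he
    omega
  have hnadj : ¬ G.Adj u v := by
    rcases hS' u hu with rfl | h
    · rcases hS' v hv with rfl | h
      · exact absurd rfl huv
      · exact fun hadj => h u hadj.symm
    · exact h v
  have hd : (compPrism G).dist (Sum.inl u) (Sum.inr v) = 2 := by
    refine dist_eq_two'_s10 (by simp) (by simpa using huv)
      (SimpleGraph.Walk.cons (by simp)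
        (SimpleGraph.Walk.cons (show (compPrism G).Adj (Sum.inr u) (Sum.inr v) from
          ⟨huv, hnadj⟩) SimpleGraph.Walk.nil)) (by simp)
  rw [hd] at he
  have e1 : (compPrism G).dist (Sum.inl u) w = 1 := by omega
  have e2 : (compPrism G).dist w (Sum.inr v) = 1 := by omega
  have ha1 := SimpleGraph.dist_eq_one_iff_adj.mp e1
  have ha2 := SimpleGraph.dist_eq_one_iff_adj.mp e2
  rcases w with z | z
  · simp only [cp_adj_ll, cp_adj_lr] at ha1 ha2
    subst ha2
    exact absurd ha1 hnadj
  · simp only [cp_adj_lr] at ha1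
    exact Or.inr ⟨u, hu, by rw [ha1]⟩

include hpre hS' in
lemma convex_T :
    IsGeoConvex (compPrism G) (Sum.inl '' S' ∪ Sum.inr '' S') := by
  rintro p hp q hq w hw
  rcases hp with ⟨u, hu, rfl⟩ | ⟨u, hu, rfl⟩ <;> rcases hq with ⟨v, hv, rfl⟩ | ⟨v, hv, rfl⟩
  · exact interval_ll_subset hpre hS' hu hv hw
  · exact interval_lr_subset hpre hS' hu hv hw
  · rw [geoInterval_comm] at hw
    exact interval_lr_subset hpre hS' hv hu hw
  · rcases interval_mem_cases hpre hw with rfl | rfl | ⟨h1, h2, he⟩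
    · exact Or.inr ⟨u, hu, rfl⟩
    · exact Or.inr ⟨v, hv, rfl⟩
    by_cases huv : u = v
    · subst huv
      rw [SimpleGraph.dist_self] at he
      omega
    have hnadj : ¬ G.Adj u v := by
      rcases hS' u hu with rfl | h
      · rcases hS' v hv with rfl | h
        · exact absurd rfl huv
        · exact fun hadj => h u hadj.symm
      · exact h v
    rw [SimpleGraph.dist_eq_one_iff_adj.mpr
      (show (compPrism G).Adj (Sum.inr u) (Sum.inr v) from ⟨huv, hnadj⟩)] at he
    omega

/-- Every left copy of an isolated vertex belongs to every hull set. -/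
lemma leaf_mem_hullSet [Nonempty V] (hpre : (compPrism G).Preconnected)
    {u : V} (hu : u ∈ Isol G) {S : Set (V ⊕ V)} (hS : IsHullSet (compPrism G) S) :
    Sum.inl u ∈ S := by
  by_contra hmem
  have hconn : (compPrism G).Connected := ⟨hpre⟩
  set U : Set (V ⊕ V) := {Sum.inl u}ᶜ with hU
  have hconv : IsGeoConvex (compPrism G) U := by
    intro p hp q hq w hw
    rcases interval_mem_cases hpre hw with rfl | rfl | ⟨h1, h2, he⟩
    · exact hp
    · exact hq
    intro hwu
    simp only [Set.mem_singleton_iff] at hwu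
    subst hwu
    -- w = inl u, interior of a geodesic, but inl u has unique neighbor inr u
    have step : ∀ x : V ⊕ V, (compPrism G).dist (Sum.inl u) x ≠ 0 →
        (compPrism G).dist (Sum.inr u) x + 1 ≤ (compPrism G).dist (Sum.inl u) x := by
      intro x hx
      obtain ⟨p', hp'⟩ := SimpleGraph.exists_walk_of_dist_ne_zero hx
      cases p' with
      | nil =>
        simp only [SimpleGraph.Walk.length_nil] at hp'
        exact (hx hp'.symm).elim
      | cons hadj tail =>
        rename_i z
        have hz : z = Sum.inr u := by
          rcases z with y | y
          · exact absurd hadj (hu y)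
          · simp only [cp_adj_lr] at hadj
            rw [hadj]
        subst hz
        have hle := SimpleGraph.dist_le tail
        simp only [SimpleGraph.Walk.length_cons] at hp'
        omega
    have c1 : (compPrism G).dist (Sum.inl u) p = (compPrism G).dist p (Sum.inl u) :=
      SimpleGraph.dist_comm
    have s1 := step p (by rw [c1]; exact h1)
    have s2 := step q h2
    have c2 : (compPrism G).dist (Sum.inr u) p = (compPrism G).dist p (Sum.inr u) :=
      SimpleGraph.dist_comm
    obtain ⟨w1, hw1⟩ := (hpre p (Sum.inr u)).exists_walk_length_eq_dist
    obtain ⟨w2, hw2⟩ := (hpre (Sum.inr u) q).exists_walk_length_eq_dist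
    have htri := SimpleGraph.dist_le (w1.append w2)
    rw [SimpleGraph.Walk.length_append, hw1, hw2] at htri
    omega
  have hsub : geoHull (compPrism G) S ⊆ U :=
    Set.sInter_subset_of_mem ⟨hconv, fun x hx => by
      intro hxx
      simp only [Set.mem_singleton_iff] at hxx
      subst hxx
      exact hmem hx⟩
  rw [hS] at hsub
  exact hsub (Set.mem_univ (Sum.inl u)) rfl

end Aux

theorem hullNumber_compPrism_one_nontrivial_lb {V : Type*} [Fintype V]
    (G : SimpleGraph V) (t : ℕ) (hdisc : ¬ G.Connected)
    (C₁ : G.ConnectedComponent) (hC₁ : C₁.supp.Nontrivial)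
    (huniq : ∀ C : G.ConnectedComponent, C.supp.Nontrivial → C = C₁)
    (ht : t = Nat.card {C : G.ConnectedComponent // ¬ C.supp.Nontrivial})
    (ht0 : 0 < t) :
    t + 2 ≤ hullNumber (compPrism G) := by
  classical
  -- reach an isolated vertex implies equality
  have hreach_isol : ∀ {x y : V}, y ∈ Isol G → G.Reachable x y → x = y := by
    intro x y hy hr
    obtain ⟨p⟩ := hr.symm
    cases p with
    | nil => rfl
    | cons h q => exact absurd h (hy _)
  -- t = number of isolated vertices
  have htIso : t = (Isol G).ncard := by
    rw [ht, ← Nat.card_coe_set_eq]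
    have hfmem : ∀ C : {C : G.ConnectedComponent // ¬ C.supp.Nontrivial},
        Quot.out C.1 ∈ Isol G := by
      rintro ⟨C, hC⟩ w hadj
      apply hC
      refine ⟨Quot.out C, ?_, w, ?_, hadj.ne⟩
      · exact Quot.out_eq C
      · exact (ConnectedComponent.sound hadj.symm.reachable).trans (Quot.out_eq C)
    apply Nat.card_eq_of_bijective
      (fun C : {C : G.ConnectedComponent // ¬ C.supp.Nontrivial} =>
        (⟨Quot.out C.1, hfmem C⟩ : Isol G))
    constructor
    · rintro ⟨C, hC⟩ ⟨D, hD⟩ h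
      simp only [Subtype.mk.injEq] at h ⊢
      rw [← Quot.out_eq C, ← Quot.out_eq D, h]
    · rintro ⟨v, hv⟩
      have hmkmem : ¬ (G.connectedComponentMk v).supp.Nontrivial := by
        rintro ⟨x, hx, y, hy, hxy⟩
        simp only [ConnectedComponent.mem_supp_iff, ConnectedComponent.eq] at hx hy
        exact hxy ((hreach_isol hv hx).trans (hreach_isol hv hy).symm)
      refine ⟨⟨G.connectedComponentMk v, hmkmem⟩, ?_⟩
      apply Subtype.ext
      exact hreach_isol hv (ConnectedComponent.exact (Quot.out_eq _))
  -- an isolated vertex exists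
  have hIsoNe : (Isol G).Nonempty := by
    rw [← Set.ncard_pos (Set.toFinite _), ← htIso]
    exact ht0
  obtain ⟨i, hi⟩ := hIsoNe
  have : Nonempty V := ⟨i⟩
  have hpre : (compPrism G).Preconnected := cp_preconnected hi
  -- two distinct non-isolated vertices
  obtain ⟨b₁, hb₁, b₂, hb₂, hb12⟩ := hC₁
  have hbni : ∀ b ∈ C₁.supp, b ∉ Isol G := by
    intro b hb hbI
    simp only [ConnectedComponent.mem_supp_iff] at hb hb₁ hb₂
    have h1 : b₁ = b := hreach_isol hbI (ConnectedComponent.exact (hb₁.trans hb.symm))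
    have h2 : b₂ = b := hreach_isol hbI (ConnectedComponent.exact (hb₂.trans hb.symm))
    exact hb12 (h1.trans h2.symm)
  -- main bound for every hull set
  have hmain : ∀ S : Set (V ⊕ V), IsHullSet (compPrism G) S → t + 2 ≤ S.ncard := by
    intro S hS
    set L : Set (V ⊕ V) := Sum.inl '' Isol G with hL
    have hLS : L ⊆ S := by
      rintro _ ⟨u, hu, rfl⟩
      exact leaf_mem_hullSet hpre hu hS
    -- S \ L has at least two elements
    have hnt : (S \ L).Nontrivial := by
      by_contra hcon
      -- then S ⊆ T_a for some a; derive contradiction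
      have key : ∀ a : V, S ⊆ Sum.inl '' (insert a (Isol G)) ∪
          Sum.inr '' (insert a (Isol G)) → False := by
        intro a hsub
        have hS'prop : ∀ u ∈ insert a (Isol G), u = a ∨ u ∈ Isol G := by
          rintro u (rfl | hu)
          · exact Or.inl rfl
          · exact Or.inr hu
        have hconv := convex_T hpre hS'prop
        have hsub2 : geoHull (compPrism G) S ⊆
            Sum.inl '' (insert a (Isol G)) ∪ Sum.inr '' (insert a (Isol G)) :=
          Set.sInter_subset_of_mem ⟨hconv, hsub⟩
        rw [hS] at hsub2
        -- pick b ∈ C₁.supp with b ≠ a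
        obtain ⟨b, hbmem, hba⟩ : ∃ b ∈ C₁.supp, b ≠ a := by
          by_cases h1 : b₁ = a
          · exact ⟨b₂, hb₂, fun h => hb12 (h1.trans h.symm)⟩
          · exact ⟨b₁, hb₁, h1⟩
        have := hsub2 (Set.mem_univ (Sum.inl b))
        rcases this with ⟨c, hc, hcb⟩ | ⟨c, hc, hcb⟩
        · have hcb' : c = b := Sum.inl.inj hcb
          rcases hc with rfl | hc
          · exact hba hcb'.symm
          · exact hbni b hbmem (hcb' ▸ hc)
        · cases hcb
      rcases Set.eq_empty_or_nonempty (S \ L) with hemp | ⟨x, hx⟩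
      · refine key i (fun s hs => ?_)
        have hsL : s ∈ L := by
          by_contra h
          exact Set.not_nonempty_empty ⟨s, hemp ▸ ⟨hs, h⟩⟩
        obtain ⟨u, hu, rfl⟩ := hsL
        exact Or.inl ⟨u, Or.inr hu, rfl⟩
      · have hsing : ∀ y ∈ S \ L, y = x := by
          intro y hy
          by_contra hne
          exact hcon ⟨y, hy, x, hx, hne⟩
        obtain ⟨a, hxa⟩ : ∃ a : V, x = Sum.inl a ∨ x = Sum.inr a := by
          rcases x with c | c
          · exact ⟨c, Or.inl rfl⟩
          · exact ⟨c, Or.inr rfl⟩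
        refine key a (fun s hs => ?_)
        by_cases hsL : s ∈ L
        · obtain ⟨u, hu, rfl⟩ := hsL
          exact Or.inl ⟨u, Or.inr hu, rfl⟩
        · have hsx : s = x := hsing s ⟨hs, hsL⟩
          rcases hxa with rfl | rfl
          · exact Or.inl ⟨a, Or.inl rfl, hsx.symm⟩
          · exact Or.inr ⟨a, Or.inl rfl, hsx.symm⟩
    -- counting
    have hfinS : S.Finite := Set.toFinite _
    have hLcard : L.ncard = t := by
      rw [hL, Set.ncard_image_of_injective _ Sum.inl_injective, htIso]
    have hdiff : (S \ L).ncard + L.ncard = S.ncard :=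
      Set.ncard_diff_add_ncard_of_subset hLS hfinS
    obtain ⟨x1, hx1, y1, hy1, hxy1⟩ := hnt
    have h2 : 1 < (S \ L).ncard :=
      (Set.one_lt_ncard (Set.toFinite _)).mpr ⟨x1, hx1, y1, hy1, hxy1⟩
    omega
  -- conclude via sInf
  refine le_csInf ⟨(Set.univ : Set (V ⊕ V)).ncard, Set.univ, rfl, ?_⟩ ?_
  · -- univ is a hull set
    refine Set.eq_univ_iff_forall.mpr (fun x => ?_)
    intro T hT
    exact hT.2 (Set.mem_univ x)
  · rintro n ⟨S, rfl, hS⟩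
    exact hmain S hS
end
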